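/- If system x(n+1)=A(n)x(n) has a Bohl dichotomy on a splitting L₁ ⊕ L₂ = ℝ^d, then L₁ = S₀ = {x₀ : lim_{n→∞} x(n,x₀) = 0}; in particular the subspace L₁ in a Bohl dichotomy is unique. -/

import Mathlib

open Filter Topology

noncomputable section

abbrev Euc (d : ℕ) := EuclideanSpace ℝ (Fin d)

/-- forward product `A(m+k-1) ⋯ A(m)` -/
def fwd {d : ℕ} (A : ℕ → (Euc d →L[ℝ] Euc d)) (m : ℕ) : ℕ → (Euc d →L[ℝ] Euc d)
  | 0 => 1
  | k + 1 => A (m + k) * fwd A m k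

/-- backward product `Ainv(n) ⋯ Ainv(n+k-1)` -/
def bwd {d : ℕ} (Ainv : ℕ → (Euc d →L[ℝ] Euc d)) (n : ℕ) : ℕ → (Euc d →L[ℝ] Euc d)
  | 0 => 1
  | k + 1 => bwd Ainv n k * Ainv (n + k)

/-- transition matrix Φ_A(n,m) -/
def Phi {d : ℕ} (A Ainv : ℕ → (Euc d →L[ℝ] Euc d)) (n m : ℕ) : Euc d →L[ℝ] Euc d :=
  if m ≤ n then fwd A m (n - m) else bwd Ainv n (m - n)

/-- A is a bounded sequence of invertible maps with bounded inverse sequence Ainv -/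
def IsLyapunov {d : ℕ} (A Ainv : ℕ → (Euc d →L[ℝ] Euc d)) : Prop :=
  (∀ n, A n * Ainv n = 1) ∧ (∀ n, Ainv n * A n = 1) ∧
    BddAbove (Set.range fun n => ‖A n‖) ∧ BddAbove (Set.range fun n => ‖Ainv n‖)

/-- `‖A‖_∞ = sup_n ‖A(n)‖` -/
def supNorm {d : ℕ} (A : ℕ → (Euc d →L[ℝ] Euc d)) : ℝ := ⨆ n, ‖A n‖

/-- solution `x(n,x₀) = Φ_A(n,0) x₀` -/
def sol {d : ℕ} (A : ℕ → (Euc d →L[ℝ] Euc d)) (n : ℕ) (x₀ : Euc d) : Euc d :=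
  fwd A 0 n x₀

/-- `λ(n,m) = (1/(n-m)) ln (‖x(n,x₀)‖ / ‖x(m,x₀)‖)` -/
def lam {d : ℕ} (A : ℕ → (Euc d →L[ℝ] Euc d)) (n m : ℕ) (x₀ : Euc d) : ℝ :=
  Real.log (‖sol A n x₀‖ / ‖sol A m x₀‖) / ((n : ℝ) - (m : ℝ))

/-- upper Bohl exponent of a subspace -/
def upperBohl {d : ℕ} (A : ℕ → (Euc d →L[ℝ] Euc d)) (L : Set (Euc d)) : ℝ :=
  ⨅ N : ℕ, sSup {r | ∃ n m : ℕ, ∃ x₀ : Euc d,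
    N < n - m ∧ x₀ ∈ L ∧ x₀ ≠ 0 ∧ r = lam A n m x₀}

/-- lower Bohl exponent of a subspace -/
def lowerBohl {d : ℕ} (A : ℕ → (Euc d →L[ℝ] Euc d)) (L : Set (Euc d)) : ℝ :=
  ⨆ N : ℕ, sInf {r | ∃ n m : ℕ, ∃ x₀ : Euc d,
    N < n - m ∧ x₀ ∈ L ∧ x₀ ≠ 0 ∧ r = lam A n m x₀}

/-- upper Bohl exponent of a vector -/
def upperBohlVec {d : ℕ} (A : ℕ → (Euc d →L[ℝ] Euc d)) (x₀ : Euc d) : ℝ :=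
  ⨅ N : ℕ, sSup {r | ∃ n m : ℕ, N < n - m ∧ r = lam A n m x₀}

/-- lower Bohl exponent of a vector -/
def lowerBohlVec {d : ℕ} (A : ℕ → (Euc d →L[ℝ] Euc d)) (x₀ : Euc d) : ℝ :=
  ⨆ N : ℕ, sInf {r | ∃ n m : ℕ, N < n - m ∧ r = lam A n m x₀}

/-- Bohl spectrum -/
def bohlSpectrum {d : ℕ} (A : ℕ → (Euc d →L[ℝ] Euc d)) : Set ℝ :=
  {γ | ∃ x₀ : Euc d, x₀ ≠ 0 ∧ γ ∈ Set.Icc (lowerBohlVec A x₀) (upperBohlVec A x₀)}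

/-- the γ-shifted system `e^{-γ} A` -/
def shift {d : ℕ} (A : ℕ → (Euc d →L[ℝ] Euc d)) (γ : ℝ) : ℕ → (Euc d →L[ℝ] Euc d) :=
  fun n => Real.exp (-γ) • A n

/-- Bohl dichotomy on a given pair of subspaces -/
def HasBohlDichotomyOn {d : ℕ} (A : ℕ → (Euc d →L[ℝ] Euc d))
    (L₁ L₂ : Submodule ℝ (Euc d)) : Prop :=
  ∃ α : ℝ, 0 < α ∧ ∃ C₁ C₂ : Euc d → ℝ, (∀ x, 0 < C₁ x) ∧ (∀ x, 0 < C₂ x) ∧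
    (∀ x₀ ∈ L₁, ∀ m n : ℕ, m ≤ n →
      ‖sol A n x₀‖ ≤ C₁ x₀ * Real.exp (-α * ((n : ℝ) - (m : ℝ))) * ‖sol A m x₀‖) ∧
    (∀ x₀ ∈ L₂, ∀ m n : ℕ, m ≤ n →
      C₂ x₀ * Real.exp (α * ((n : ℝ) - (m : ℝ))) * ‖sol A m x₀‖ ≤ ‖sol A n x₀‖)

/-- Bohl dichotomy -/
def HasBohlDichotomy {d : ℕ} (A : ℕ → (Euc d →L[ℝ] Euc d)) : Prop :=
  ∃ L₁ L₂ : Submodule ℝ (Euc d), IsCompl L₁ L₂ ∧ HasBohlDichotomyOn A L₁ L₂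

/-- Bohl dichotomy spectrum -/
def bdSpectrum {d : ℕ} (A : ℕ → (Euc d →L[ℝ] Euc d)) : Set ℝ :=
  {γ | ¬ HasBohlDichotomy (shift A γ)}

theorem stmt17 {d : ℕ} (A Ainv : ℕ → (Euc d →L[ℝ] Euc d)) (hA : IsLyapunov A Ainv)
    (L₁ L₂ : Submodule ℝ (Euc d)) (hc : IsCompl L₁ L₂)
    (h : HasBohlDichotomyOn A L₁ L₂) :
    (L₁ : Set (Euc d)) = {x₀ : Euc d | Tendsto (fun n => sol A n x₀) atTop (nhds 0)} := by

  obtain ⟨α, hα, C₁, C₂, hC₁, hC₂, h₁, h₂⟩ := h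
  have hsol0 : ∀ x : Euc d, sol A 0 x = x := by
    intro x; simp [sol, fwd]
  have key : ∀ x ∈ L₁, Tendsto (fun n => sol A n x) atTop (nhds 0) := by
    intro x hx
    rw [tendsto_zero_iff_norm_tendsto_zero]
    have hb : ∀ n : ℕ, ‖sol A n x‖ ≤ C₁ x * Real.exp (-α * n) * ‖x‖ := by
      intro n
      have := h₁ x hx 0 n (Nat.zero_le n)
      simpa [hsol0] using this
    have hexp : Tendsto (fun n : ℕ => Real.exp (-α * n)) atTop (nhds 0) := by
      apply Real.tendsto_exp_atBot.comp
      have : Tendsto (fun n : ℕ => (n : ℝ)) atTop atTop := tendsto_natCast_atTop_atTop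
      exact this.const_mul_atTop_of_neg (by linarith)
    have hlim : Tendsto (fun n : ℕ => C₁ x * Real.exp (-α * n) * ‖x‖) atTop (nhds 0) := by
      have := (hexp.const_mul (C₁ x)).mul_const ‖x‖
      simpa using this
    exact squeeze_zero (fun n => norm_nonneg _) hb hlim
  ext x₀
  simp only [SetLike.mem_coe, Set.mem_setOf_eq]
  constructor
  · intro hx
    exact key x₀ hx
  · intro hx
    obtain ⟨p, q, hp, hq, hpq⟩ := Submodule.codisjoint_iff_exists_add_eq.mp hc.codisjoint x₀
    have hqlim : Tendsto (fun n => sol A n q) atTop (nhds 0) := by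
      have heq : (fun n => sol A n q) = fun n => sol A n x₀ - sol A n p := by
        funext n
        rw [← hpq]
        simp [sol, map_add]
      rw [heq]
      simpa using hx.sub (key p hp)
    by_cases hq0 : q = 0
    · subst hq0
      rw [add_zero] at hpq
      rwa [← hpq]
    · exfalso
      have hε : 0 < C₂ q * ‖q‖ := mul_pos (hC₂ q) (norm_pos_iff.mpr hq0)
      have := (tendsto_zero_iff_norm_tendsto_zero.mp hqlim)
      have hev : ∀ᶠ n : ℕ in atTop, ‖sol A n q‖ < C₂ q * ‖q‖ :=
        (this.eventually (gt_mem_nhds hε))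
      obtain ⟨n, hn⟩ := hev.exists
      have hlow := h₂ q hq 0 n (Nat.zero_le n)
      rw [hsol0] at hlow
      have h1 : (1 : ℝ) ≤ Real.exp (α * ((n : ℝ) - ((0 : ℕ) : ℝ))) := by
        rw [Real.one_le_exp_iff]
        simp only [Nat.cast_zero, sub_zero]
        positivity
      nlinarith [mul_le_mul_of_nonneg_right
        (mul_le_mul_of_nonneg_left h1 (hC₂ q).le) (norm_nonneg q)]
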